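/- Let A be a commutative ring, I an ideal with C = A/I, a ∈ A with image c in C, and suppose J := ∪_n Ann_C(c^n) equals Ann_C(c). Let A' = A[I/a] ⊆ A_a and let I' = a^{-1}I ⊆ A' be the ideal of elements x ∈ A' with ax ∈ I·A'. Then the kernel of the natural surjection A' → C/J equals I'. -/

import Mathlib

set_option maxHeartbeats 1000000
set_option synthInstance.maxHeartbeats 400000

/-- with `C = A/I`, `c` the image of `a`, assume `⋃ₙ Ann(cⁿ) = Ann(c)`.
Let `A' = A[I/a] ⊆ A_a` (the `a`-chart of the blowup along `I + (a)`).  The natural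
surjection `A' → C/J` (induced by the localization map `A_a → C_c`, through which `C/J`
embeds) has kernel `I' = {x ∈ A' : a·x ∈ I·A'}`. -/
theorem stmt3 (A : Type) [CommRing A] (I : Ideal A) (a : A)
    (hJ : (⨆ n : ℕ, Ideal.torsionOf (A ⧸ I) (A ⧸ I) ((Ideal.Quotient.mk I a) ^ (n + 1)))
        = Ideal.torsionOf (A ⧸ I) (A ⧸ I) (Ideal.Quotient.mk I a))
    (Aa' : Subalgebra A (Localization.Away a))
    (hAa' : Aa' = Algebra.adjoin A {y : Localization.Away a |
      ∃ t ∈ I, algebraMap A (Localization.Away a) a * y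
        = algebraMap A (Localization.Away a) t}) :
    ∀ x : Aa',
      (IsLocalization.Away.map (Localization.Away a)
          (Localization.Away (Ideal.Quotient.mk I a)) (Ideal.Quotient.mk I) a)
          (x : Localization.Away a) = 0
        ↔ algebraMap A Aa' a * x ∈ Ideal.map (algebraMap A Aa') I := by
  intro x
  set c : A ⧸ I := Ideal.Quotient.mk I a with hc
  set L := Localization.Away a
  set Cc := Localization.Away c
  set φ : L →+* Cc := IsLocalization.Away.map L Cc (Ideal.Quotient.mk I) a with hφ
  set K : Ideal Aa' := Ideal.map (algebraMap A Aa') I with hK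
  have hφalg : ∀ r : A, φ (algebraMap A L r) = algebraMap (A ⧸ I) Cc (Ideal.Quotient.mk I r) := by
    intro r
    exact IsLocalization.map_eq _ r
  set ψ : Aa' →+* Cc := φ.comp Aa'.subtype with hψ
  have hψK : ∀ u ∈ K, ψ u = 0 := by
    intro u hu
    have hle : K ≤ RingHom.ker ψ := by
      rw [hK, Ideal.map_le_iff_le_comap]
      intro t ht
      simp only [Ideal.mem_comap, RingHom.mem_ker, hψ, RingHom.comp_apply]
      show φ (algebraMap A L t) = 0
      rw [hφalg, Ideal.Quotient.eq_zero_iff_mem.mpr ht, map_zero]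
    exact hle hu
  have hφa : IsUnit (φ (algebraMap A L a)) := by
    rw [hφalg]
    exact IsLocalization.map_units Cc ⟨c, Submonoid.mem_powers c⟩
  have cancel : ∀ u : Aa', algebraMap A Aa' a * u ∈ K → φ (u : L) = 0 := by
    intro u hu
    have h1 : φ ((algebraMap A L a) * (u : L)) = 0 := by
      have e : ((algebraMap A Aa' a * u : Aa') : L) = algebraMap A L a * (u : L) := by
        rw [Subalgebra.coe_mul, Subalgebra.coe_algebraMap]
      have h := hψK _ hu
      rw [hψ, RingHom.comp_apply] at h
      rw [← e]
      exact h
    rw [map_mul] at h1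
    exact (hφa.mul_right_eq_zero).mp h1
  -- structure lemma
  have key : ∀ w : L, w ∈ Algebra.adjoin A {y : L |
        ∃ t ∈ I, algebraMap A L a * y = algebraMap A L t} → ∀ hw : w ∈ Aa', ∃ α : A,
      algebraMap A Aa' a * (⟨w, hw⟩ - algebraMap A Aa' α) ∈ K := by
    intro w hw'
    induction hw' using Algebra.adjoin_induction with
    | mem y hy =>
        intro hyA
        obtain ⟨t, ht, hty⟩ := hy
        refine ⟨0, ?_⟩
        have : algebraMap A Aa' a * (⟨y, hyA⟩ - algebraMap A Aa' 0) = algebraMap A Aa' t := by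
          apply Subtype.ext
          push_cast
          simpa using hty
        rw [this]
        exact Ideal.mem_map_of_mem _ ht
    | algebraMap r =>
        intro hrA
        refine ⟨r, ?_⟩
        have : (⟨algebraMap A L r, hrA⟩ : Aa') = algebraMap A Aa' r := rfl
        rw [this, sub_self, mul_zero]
        exact K.zero_mem
    | add p q hp hq ihp ihq =>
        intro hwA
        have hpA : p ∈ Aa' := by rw [hAa']; exact hp
        have hqA : q ∈ Aa' := by rw [hAa']; exact hq
        obtain ⟨α₁, h₁⟩ := ihp hpA
        obtain ⟨α₂, h₂⟩ := ihq hqA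
        refine ⟨α₁ + α₂, ?_⟩
        have heq : algebraMap A Aa' a * (⟨p + q, hwA⟩ - algebraMap A Aa' (α₁ + α₂))
            = algebraMap A Aa' a * ((⟨p, hpA⟩ : Aa') - algebraMap A Aa' α₁)
              + algebraMap A Aa' a * ((⟨q, hqA⟩ : Aa') - algebraMap A Aa' α₂) := by
          have : (⟨p + q, hwA⟩ : Aa') = ⟨p, hpA⟩ + ⟨q, hqA⟩ := rfl
          rw [this, map_add]
          ring
        rw [heq]
        exact K.add_mem h₁ h₂
    | mul p q hp hq ihp ihq =>
        intro hwA
        have hpA : p ∈ Aa' := by rw [hAa']; exact hp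
        have hqA : q ∈ Aa' := by rw [hAa']; exact hq
        obtain ⟨α₁, h₁⟩ := ihp hpA
        obtain ⟨α₂, h₂⟩ := ihq hqA
        refine ⟨α₁ * α₂, ?_⟩
        have heq : algebraMap A Aa' a * (⟨p * q, hwA⟩ - algebraMap A Aa' (α₁ * α₂))
            = (⟨p, hpA⟩ : Aa') * (algebraMap A Aa' a * ((⟨q, hqA⟩ : Aa') - algebraMap A Aa' α₂))
              + algebraMap A Aa' α₂
                * (algebraMap A Aa' a * ((⟨p, hpA⟩ : Aa') - algebraMap A Aa' α₁)) := by
          have : (⟨p * q, hwA⟩ : Aa') = ⟨p, hpA⟩ * ⟨q, hqA⟩ := rfl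
          rw [this, map_mul]
          ring
        rw [heq]
        exact K.add_mem (K.mul_mem_left _ h₂) (K.mul_mem_left _ h₁)
  obtain ⟨α, hz⟩ := key (x : L) (by rw [← hAa']; exact x.2) x.2
  have hxx : (⟨(x : L), x.2⟩ : Aa') = x := rfl
  rw [hxx] at hz
  set z : Aa' := x - algebraMap A Aa' α with hzdef
  have hφz : φ (z : L) = 0 := cancel z hz
  have hxsplit : (x : L) = algebraMap A L α + (z : L) := by
    have : x = algebraMap A Aa' α + z := by rw [hzdef]; ring
    rw [this]
    rfl
  have hφx : φ (x : L) = algebraMap (A ⧸ I) Cc (Ideal.Quotient.mk I α) := by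
    rw [hxsplit, map_add, hφz, add_zero, hφalg]
  constructor
  · intro h0
    -- from φ x = 0 deduce a * α ∈ I using hJ
    rw [hφx] at h0
    obtain ⟨⟨m, n, rfl⟩, hm⟩ := (IsLocalization.map_eq_zero_iff (Submonoid.powers c) Cc _).mp h0
    have hcα : c * Ideal.Quotient.mk I α = 0 := by
      rcases n with _ | k
      · simp only [pow_zero, one_mul] at hm
        rw [hm, mul_zero]
      · have hmem : Ideal.Quotient.mk I α ∈
            Ideal.torsionOf (A ⧸ I) (A ⧸ I) (c ^ (k + 1)) := by
          rw [Ideal.mem_torsionOf_iff, smul_eq_mul, mul_comm]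
          exact hm
        have : Ideal.Quotient.mk I α ∈
            ⨆ n : ℕ, Ideal.torsionOf (A ⧸ I) (A ⧸ I) (c ^ (n + 1)) :=
          le_iSup (fun n : ℕ => Ideal.torsionOf (A ⧸ I) (A ⧸ I) (c ^ (n + 1))) k hmem
        rw [hJ, Ideal.mem_torsionOf_iff, smul_eq_mul] at this
        rw [mul_comm]
        exact this
    have haα : a * α ∈ I := by
      rw [← Ideal.Quotient.eq_zero_iff_mem, map_mul]
      exact hcα
    have : algebraMap A Aa' a * x
        = algebraMap A Aa' a * z + algebraMap A Aa' (a * α) := by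
      rw [map_mul, hzdef]; ring
    rw [this]
    exact K.add_mem hz (Ideal.mem_map_of_mem _ haα)
  · intro hmem
    exact cancel x hmem
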